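/- Let k ≥ 2 and let G = (V, E) be an oriented k-uniform hypergraph with Property O. Then there exists an oriented (k+1)-uniform hypergraph with Property O on a vertex set of size 3·|V| having exactly 4·|E|·|V| edges. -/

import Mathlib

/-- An ordered `k`-set (`k`-tuple of distinct elements of `V`), given as an
embedding `Fin k ↪ V`, is *consistent* with a (strict) linear order `r` on `V`
if its entries are increasing with respect to `r`. -/
def Consistent {k : ℕ} {V : Type*} (r : V → V → Prop) (e : Fin k ↪ V) : Prop :=
  ∀ i j : Fin k, i < j → r (e i) (e j)

/-- An *oriented `k`-uniform hypergraph* on `V`: a family of `k`-tuples of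
distinct elements of `V` (embeddings `Fin k ↪ V`) such that no two tuples have
the same underlying `k`-element set. -/
structure OrientedHypergraph (k : ℕ) (V : Type*) where
  edges : Finset (Fin k ↪ V)
  eq_of_range_eq : ∀ e ∈ edges, ∀ f ∈ edges, Set.range ⇑e = Set.range ⇑f → e = f

/-- *Property O*: for every linear order (given by its strict order relation `r`)
on the vertex set, some edge is consistent with it. -/
def PropertyO {k : ℕ} {V : Type*} (H : OrientedHypergraph k V) : Prop :=
  ∀ r : V → V → Prop, IsStrictTotalOrder V r → ∃ e ∈ H.edges, Consistent r e

/-- A *`k`-tournament*: an oriented `k`-uniform hypergraph containing a tuple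
for every `k`-element subset of the vertex set (such a tuple is unique by
`eq_of_range_eq`). -/
def IsTournament {k : ℕ} {V : Type*} (H : OrientedHypergraph k V) : Prop :=
  ∀ S : Finset V, S.card = k → ∃ e ∈ H.edges, Set.range ⇑e = ↑S

namespace PropOAux

open Function

lemma range_snoc {n : ℕ} {α : Type*} (b : Fin n → α) (x : α) :
    Set.range (Fin.snoc b x : Fin (n + 1) → α) = insert x (Set.range b) := by
  ext w
  simp only [Set.mem_range, Set.mem_insert_iff]
  constructor
  · rintro ⟨i, rfl⟩
    rcases Fin.eq_castSucc_or_eq_last i with ⟨j, rfl⟩ | rfl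
    · exact Or.inr ⟨j, by simp⟩
    · simp
  · rintro (rfl | ⟨i, rfl⟩)
    · exact ⟨Fin.last _, by simp⟩
    · exact ⟨i.castSucc, by simp⟩

variable {k : ℕ} {V W : Type*}

/-- Prepend a point to an edge. -/
def cEmb (a b : V ↪ W) (hab : ∀ u v, a u ≠ b v) (x : V) (f : Fin k ↪ V) :
    Fin (k + 1) ↪ W :=
  ⟨Fin.cons (a x) (fun i => b (f i)), by
    rw [Fin.cons_injective_iff]
    refine ⟨?_, fun i j h => f.injective (b.injective h)⟩
    rintro ⟨i, hi⟩
    exact hab x (f i) hi.symm⟩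

/-- Append a point to an edge. -/
def sEmb (a b : V ↪ W) (hab : ∀ u v, a u ≠ b v) (x : V) (f : Fin k ↪ V) :
    Fin (k + 1) ↪ W :=
  ⟨Fin.snoc (fun i => b (f i)) (a x), by
    intro i j h
    rcases Fin.eq_castSucc_or_eq_last i with ⟨i', rfl⟩ | rfl <;>
      rcases Fin.eq_castSucc_or_eq_last j with ⟨j', rfl⟩ | rfl
    · simp only [Fin.snoc_castSucc] at h
      exact congrArg Fin.castSucc (f.injective (b.injective h))
    · simp only [Fin.snoc_castSucc, Fin.snoc_last] at h
      exact absurd h.symm (hab x (f i'))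
    · simp only [Fin.snoc_castSucc, Fin.snoc_last] at h
      exact absurd h (hab x (f j'))
    · rfl⟩

lemma range_cEmb (a b : V ↪ W) (hab : ∀ u v, a u ≠ b v) (x : V) (f : Fin k ↪ V) :
    Set.range ⇑(cEmb a b hab x f) = insert (a x) (⇑b '' Set.range ⇑f) := by
  show Set.range (Fin.cons (a x) (fun i => b (f i))) = _
  rw [Fin.range_cons]
  congr 1
  ext w
  simp [Set.mem_range]

lemma range_sEmb (a b : V ↪ W) (hab : ∀ u v, a u ≠ b v) (x : V) (f : Fin k ↪ V) :
    Set.range ⇑(sEmb a b hab x f) = insert (a x) (⇑b '' Set.range ⇑f) := by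
  show Set.range (Fin.snoc (fun i => b (f i)) (a x)) = _
  rw [range_snoc]
  congr 1
  ext w
  simp [Set.mem_range]

/-- Point copy of each of the four classes. -/
def pt : Fin 4 → Fin 3 := ![0, 0, 2, 1]

/-- Edge copy of each of the four classes. -/
def ec : Fin 4 → Fin 3 := ![1, 2, 1, 0]

lemma pt_ne_ec : ∀ c : Fin 4, pt c ≠ ec c := by decide

section Three

variable (j : Fin 3 → (V ↪ W))
variable (hj : ∀ ⦃c c' : Fin 3⦄ ⦃a b : V⦄, j c a = j c' b → c = c' ∧ a = b)

include hj

lemma jne (c c' : Fin 3) (hcc : c ≠ c') : ∀ u v, j c u ≠ j c' v :=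
  fun _ _ h => hcc (hj h).1

/-- The key extraction lemma: the data of an edge can be recovered from its
underlying set. -/
lemma master {p q p' q' : Fin 3} (hpq : p ≠ q) (hp'q' : p' ≠ q')
    {x x' : V} {S S' : Set V} {a b : V} (ha : a ∈ S) (hb : b ∈ S) (hab : a ≠ b)
    (h : insert (j p x) (⇑(j q) '' S) = insert (j p' x') (⇑(j q') '' S')) :
    p = p' ∧ q = q' ∧ x = x' ∧ S = S' := by
  have key : ∀ v ∈ S, j q v = j p' x' ∨ j q v ∈ ⇑(j q') '' S' := by
    intro v hv
    have : (j q v : W) ∈ insert (j p' x') (⇑(j q') '' S') := by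
      rw [← h]; exact Set.mem_insert_iff.2 (Or.inr ⟨v, hv, rfl⟩)
    simpa using this
  have hq : q = q' := by
    rcases key a ha with h1 | ⟨w, _, hw2⟩
    · rcases key b hb with h2 | ⟨w, _, hw2⟩
      · exact absurd ((hj h1).2.trans (hj h2).2.symm) hab
      · exact ((hj hw2).1).symm
    · exact ((hj hw2).1).symm
  subst hq
  have hkey' : ∀ v ∈ S', j q v = j p x ∨ j q v ∈ ⇑(j q) '' S := by
    intro v hv
    have : (j q v : W) ∈ insert (j p x) (⇑(j q) '' S) := by
      rw [h]; exact Set.mem_insert_iff.2 (Or.inr ⟨v, hv, rfl⟩)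
    simpa using this
  have hpx : p = p' ∧ x = x' := by
    have : (j p x : W) ∈ insert (j p' x') (⇑(j q) '' S') := by
      rw [← h]; exact Set.mem_insert _ _
    rcases Set.mem_insert_iff.1 this with h1 | ⟨w, _, hw2⟩
    · exact ⟨(hj h1).1, (hj h1).2⟩
    · exact absurd (hj hw2).1.symm hpq
  have hS : S = S' := by
    ext v
    constructor
    · intro hv
      rcases key v hv with h1 | ⟨w, hw, hw2⟩
      · exact absurd ((hj h1).1).symm hp'q'
      · rw [← (hj hw2).2]; exact hw
    · intro hv
      rcases hkey' v hv with h1 | ⟨w, hw, hw2⟩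
      · exact absurd ((hj h1).1).symm hpq
      · rw [← (hj hw2).2]; exact hw
  exact ⟨hpx.1, rfl, hpx.2, hS⟩

/-- The four families of edges of the new hypergraph. -/
def edgeOf (x : V) (f : Fin k ↪ V) : Fin 4 → (Fin (k + 1) ↪ W) :=
  ![cEmb (j 0) (j 1) (jne j hj 0 1 (by decide)) x f,
    sEmb (j 0) (j 2) (jne j hj 0 2 (by decide)) x f,
    sEmb (j 2) (j 1) (jne j hj 2 1 (by decide)) x f,
    sEmb (j 1) (j 0) (jne j hj 1 0 (by decide)) x f]

lemma range_edgeOf (x : V) (f : Fin k ↪ V) (c : Fin 4) :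
    Set.range ⇑(edgeOf j hj x f c) =
      insert (j (pt c) x) (⇑(j (ec c)) '' Set.range ⇑f) := by
  fin_cases c <;>
    simp [edgeOf, pt, ec, range_cEmb, range_sEmb]

lemma edgeOf_inj (hk : 2 ≤ k) {c c' : Fin 4} {x x' : V} {f f' : Fin k ↪ V}
    (h : edgeOf j hj x f c = edgeOf j hj x' f' c') :
    c = c' ∧ x = x' ∧ f = f' := by
  have hr := congrArg (fun e : Fin (k + 1) ↪ W => Set.range ⇑e) h
  simp only [range_edgeOf] at hr
  have h01 : (⟨0, by omega⟩ : Fin k) ≠ ⟨1, by omega⟩ := by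
    simp [Fin.ext_iff]
  have hm0 : f ⟨0, by omega⟩ ∈ Set.range ⇑f := ⟨_, rfl⟩
  have hm1 : f ⟨1, by omega⟩ ∈ Set.range ⇑f := ⟨_, rfl⟩
  obtain ⟨hp, hq, hx, hS⟩ :=
    master j hj (pt_ne_ec c) (pt_ne_ec c') hm0 hm1 (fun hh => h01 (f.injective hh)) hr
  have hc : c = c' :=
    (by decide : ∀ c c' : Fin 4, pt c = pt c' → ec c = ec c' → c = c') c c' hp hq
  subst hc
  subst hx
  refine ⟨rfl, rfl, ?_⟩
  apply DFunLike.ext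
  intro i
  fin_cases c
  · have h2 : (Fin.cons (j 0 x) (fun t => j 1 (f t)) : Fin (k + 1) → W) i.succ =
        (Fin.cons (j 0 x) (fun t => j 1 (f' t)) : Fin (k + 1) → W) i.succ := DFunLike.congr_fun h i.succ
    rw [Fin.cons_succ, Fin.cons_succ] at h2
    exact (hj h2).2
  · have h2 : (Fin.snoc (fun t => j 2 (f t)) (j 0 x) : Fin (k + 1) → W) i.castSucc =
        (Fin.snoc (fun t => j 2 (f' t)) (j 0 x) : Fin (k + 1) → W) i.castSucc := DFunLike.congr_fun h i.castSucc
    rw [Fin.snoc_castSucc, Fin.snoc_castSucc] at h2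
    exact (hj h2).2
  · have h2 : (Fin.snoc (fun t => j 1 (f t)) (j 2 x) : Fin (k + 1) → W) i.castSucc =
        (Fin.snoc (fun t => j 1 (f' t)) (j 2 x) : Fin (k + 1) → W) i.castSucc := DFunLike.congr_fun h i.castSucc
    rw [Fin.snoc_castSucc, Fin.snoc_castSucc] at h2
    exact (hj h2).2
  · have h2 : (Fin.snoc (fun t => j 0 (f t)) (j 1 x) : Fin (k + 1) → W) i.castSucc =
        (Fin.snoc (fun t => j 0 (f' t)) (j 1 x) : Fin (k + 1) → W) i.castSucc := DFunLike.congr_fun h i.castSucc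
    rw [Fin.snoc_castSucc, Fin.snoc_castSucc] at h2
    exact (hj h2).2

variable [Fintype V] [DecidableEq (Fin (k + 1) ↪ W)]

/-- The edge set of the new hypergraph. -/
def bigEdges (H : OrientedHypergraph k V) : Finset (Fin (k + 1) ↪ W) :=
  ((Finset.univ : Finset (Fin 4 × V)) ×ˢ H.edges).image
    fun p => edgeOf j hj p.1.2 p.2 p.1.1

lemma mem_bigEdges {H : OrientedHypergraph k V} (c : Fin 4) (x : V)
    {f : Fin k ↪ V} (hf : f ∈ H.edges) : edgeOf j hj x f c ∈ bigEdges j hj H :=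
  Finset.mem_image.2 ⟨((c, x), f), Finset.mem_product.2 ⟨Finset.mem_univ _, hf⟩, rfl⟩

lemma card_bigEdges (hk : 2 ≤ k) (H : OrientedHypergraph k V) :
    (bigEdges j hj H).card = 4 * H.edges.card * Fintype.card V := by
  have hinj : ∀ p p' : (Fin 4 × V) × (Fin k ↪ V),
      edgeOf j hj p.1.2 p.2 p.1.1 = edgeOf j hj p'.1.2 p'.2 p'.1.1 → p = p' := by
    rintro ⟨⟨c, x⟩, f⟩ ⟨⟨c', x'⟩, f'⟩ hh
    obtain ⟨rfl, rfl, rfl⟩ := edgeOf_inj j hj hk hh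
    rfl
  rw [bigEdges, Finset.card_image_of_injective _ hinj, Finset.card_product]
  simp only [Finset.card_univ, Fintype.card_prod, Fintype.card_fin]
  ring

lemma bigEdges_eq_of_range_eq (hk : 2 ≤ k) (H : OrientedHypergraph k V) :
    ∀ e ∈ bigEdges j hj H, ∀ f ∈ bigEdges j hj H,
      Set.range ⇑e = Set.range ⇑f → e = f := by
  intro e he e' he' hr
  obtain ⟨⟨⟨c, x⟩, f⟩, hmem, rfl⟩ := Finset.mem_image.1 he
  obtain ⟨⟨⟨c', x'⟩, f'⟩, hmem', rfl⟩ := Finset.mem_image.1 he'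
  have hf : f ∈ H.edges := (Finset.mem_product.1 hmem).2
  have hf' : f' ∈ H.edges := (Finset.mem_product.1 hmem').2
  rw [range_edgeOf, range_edgeOf] at hr
  have h01 : (⟨0, by omega⟩ : Fin k) ≠ ⟨1, by omega⟩ := by
    simp [Fin.ext_iff]
  have hm0 : f ⟨0, by omega⟩ ∈ Set.range ⇑f := ⟨_, rfl⟩
  have hm1 : f ⟨1, by omega⟩ ∈ Set.range ⇑f := ⟨_, rfl⟩
  obtain ⟨hp, hq, hx, hS⟩ :=
    master j hj (pt_ne_ec c) (pt_ne_ec c') hm0 hm1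
      (fun hh => h01 (f.injective hh)) hr
  have hc : c = c' :=
    (by decide : ∀ c c' : Fin 4, pt c = pt c' → ec c = ec c' → c = c') c c' hp hq
  have hff : f = f' := H.eq_of_range_eq f hf f' hf' hS
  rw [hc, hx, hff]


end Three

/-- Consistency of prepended edges. -/
lemma consistent_cEmb {r : W → W → Prop} {a b : V ↪ W}
    {hab : ∀ u v, a u ≠ b v} {x : V} {f : Fin k ↪ V}
    (hf : ∀ i i' : Fin k, i < i' → r (b (f i)) (b (f i')))
    (hx : ∀ i, r (a x) (b (f i))) : Consistent r (cEmb a b hab x f) := by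
  intro i i' hlt
  have hne : i' ≠ 0 := Fin.pos_iff_ne_zero.mp (lt_of_le_of_lt (Fin.zero_le i) hlt)
  obtain ⟨i'', rfl⟩ := Fin.eq_succ_of_ne_zero hne
  rcases Fin.eq_zero_or_eq_succ i with rfl | ⟨i0, rfl⟩
  · simp only [cEmb, Function.Embedding.coeFn_mk, Fin.cons_zero, Fin.cons_succ]
    exact hx i''
  · simp only [cEmb, Function.Embedding.coeFn_mk, Fin.cons_succ]
    exact hf _ _ (by rwa [Fin.succ_lt_succ_iff] at hlt)

/-- Consistency of appended edges. -/
lemma consistent_sEmb {r : W → W → Prop} {a b : V ↪ W}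
    {hab : ∀ u v, a u ≠ b v} {x : V} {f : Fin k ↪ V}
    (hf : ∀ i i' : Fin k, i < i' → r (b (f i)) (b (f i')))
    (hx : ∀ i, r (b (f i)) (a x)) : Consistent r (sEmb a b hab x f) := by
  intro i i' hlt
  obtain ⟨i0, rfl⟩ := Fin.exists_castSucc_eq.2 (Fin.ne_last_of_lt hlt)
  rcases Fin.eq_castSucc_or_eq_last i' with ⟨i1, rfl⟩ | rfl
  · simp only [sEmb, Function.Embedding.coeFn_mk, Fin.snoc_castSucc]
    change r (Fin.snoc (α := fun _ => W) (fun i => b (f i)) (a x) i0.castSucc)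
      (Fin.snoc (α := fun _ => W) (fun i => b (f i)) (a x) i1.castSucc)
    rw [Fin.snoc_castSucc, Fin.snoc_castSucc]
    exact hf _ _ (by rwa [Fin.castSucc_lt_castSucc_iff] at hlt)
  · simp only [sEmb, Function.Embedding.coeFn_mk, Fin.snoc_castSucc, Fin.snoc_last]
    change r (Fin.snoc (α := fun _ => W) (fun i => b (f i)) (a x) i0.castSucc)
      (Fin.snoc (α := fun _ => W) (fun i => b (f i)) (a x) (Fin.last k))
    rw [Fin.snoc_castSucc, Fin.snoc_last]
    exact hx i0

/-- induced order on a copy -/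
lemma indr_STO {r : W → W → Prop} (hr : IsStrictTotalOrder W r) (g : V ↪ W) :
    IsStrictTotalOrder V (fun u v => r (g u) (g v)) := by
  haveI := hr
  exact
    { trichotomous := fun a b => by
        rcases trichotomous (r := r) (g a) (g b) with h | h | h
        · exact fun h1 _ => absurd h h1
        · exact fun _ _ => g.injective h
        · exact fun _ h2 => absurd h h2
      irrefl := fun a => irrefl (g a)
      trans := fun a b c hab hbc => _root_.trans hab hbc }

end PropOAux

open PropOAux in
/-- induction step of the construction: from an oriented
`k`-uniform hypergraph `H` with Property O one obtains an oriented
`(k+1)`-uniform hypergraph with Property O on `3·|V|` vertices with exactly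
`4·|E|·|V|` edges. -/
theorem construction_step {V : Type*} [Fintype V] (k : ℕ) (hk : 2 ≤ k)
    (H : OrientedHypergraph k V) (hO : PropertyO H) :
    ∃ H' : OrientedHypergraph (k + 1) (Fin (3 * Fintype.card V)),
      PropertyO H' ∧ H'.edges.card = 4 * H.edges.card * Fintype.card V := by
  classical
  have hcard : Fintype.card (Fin 3 × V) = Fintype.card (Fin (3 * Fintype.card V)) := by
    simp
  let e : Fin 3 × V ≃ Fin (3 * Fintype.card V) := Fintype.equivOfCardEq hcard
  let j : Fin 3 → (V ↪ Fin (3 * Fintype.card V)) := fun c =>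
    ⟨fun v => e (c, v), fun a b h => by
      simpa using congrArg Prod.snd (e.injective h)⟩
  have hj : ∀ ⦃c c' : Fin 3⦄ ⦃a b : V⦄, j c a = j c' b → c = c' ∧ a = b := by
    intro c c' a b h
    have h2 : (c, a) = (c', b) := e.injective h
    exact ⟨congrArg Prod.fst h2, congrArg Prod.snd h2⟩
  refine ⟨⟨bigEdges j hj H, bigEdges_eq_of_range_eq j hj hk H⟩, ?_, card_bigEdges j hj hk H⟩
  -- Property O
  intro r hr
  haveI := hr
  obtain ⟨ex, hex, hexc⟩ := hO _ (indr_STO hr (j 0))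
  obtain ⟨ey, hey, heyc⟩ := hO _ (indr_STO hr (j 1))
  obtain ⟨ez, hez, hezc⟩ := hO _ (indr_STO hr (j 2))
  have flip : ∀ {u w : Fin (3 * Fintype.card V)}, u ≠ w → ¬r u w → r w u := by
    intro u w hne hn
    rcases trichotomous (r := r) u w with h | h | h
    · exact absurd h hn
    · exact absurd h hne
    · exact h
  -- the maximal index
  have hk1 : k - 1 < k := by omega
  set ilast : Fin k := ⟨k - 1, hk1⟩ with hilast
  have hle : ∀ (g : Fin 3) (f : Fin k ↪ V), Consistent (fun u v => r (j g u) (j g v)) f →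
      ∀ i, j g (f i) = j g (f ilast) ∨ r (j g (f i)) (j g (f ilast)) := by
    intro g f hc i
    have hile : i ≤ ilast := by
      have := i.isLt
      simp only [Fin.le_def, hilast]
      omega
    rcases hile.lt_or_eq with h | h
    · exact Or.inr (hc i ilast h)
    · exact Or.inl (by rw [h])
  by_cases hB : ∃ y : V, ∀ i, r (j 0 (ex i)) (j 1 y)
  · obtain ⟨y, hy⟩ := hB
    refine ⟨edgeOf j hj y ex 3, mem_bigEdges j hj 3 y hex, ?_⟩
    show Consistent r (sEmb (j 1) (j 0) (jne j hj 1 0 (by decide)) y ex)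
    exact consistent_sEmb (fun i i' h => hexc i i' h) hy
  · have hB' : ∀ y : V, ∃ i, r (j 1 y) (j 0 (ex i)) := by
      intro y
      rcases not_forall.1 (fun h => hB ⟨y, h⟩) with ⟨i, hi⟩
      exact ⟨i, flip (jne j hj 0 1 (by decide) (ex i) y) hi⟩
    by_cases hC : ∃ z : V, ∀ i, r (j 1 (ey i)) (j 2 z)
    · obtain ⟨z, hz⟩ := hC
      refine ⟨edgeOf j hj z ey 2, mem_bigEdges j hj 2 z hey, ?_⟩
      show Consistent r (sEmb (j 2) (j 1) (jne j hj 2 1 (by decide)) z ey)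
      exact consistent_sEmb (fun i i' h => heyc i i' h) hz
    · have hC' : ∀ z : V, ∃ i, r (j 2 z) (j 1 (ey i)) := by
        intro z
        rcases not_forall.1 (fun h => hC ⟨z, h⟩) with ⟨i, hi⟩
        exact ⟨i, flip (jne j hj 1 2 (by decide) (ey i) z) hi⟩
      refine ⟨edgeOf j hj (ex ilast) ez 1, mem_bigEdges j hj 1 (ex ilast) hez, ?_⟩
      show Consistent r (sEmb (j 0) (j 2) (jne j hj 0 2 (by decide)) (ex ilast) ez)
      refine consistent_sEmb (fun i i' h => hezc i i' h) ?_
      intro i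
      -- z := ez i; find m with r (j2 z) (j1 (ey m))
      obtain ⟨m, hm⟩ := hC' (ez i)
      -- ey m ≤ ey ilast
      have hm2 : r (j 2 (ez i)) (j 1 (ey ilast)) := by
        rcases hle 1 ey heyc m with h | h
        · rwa [h] at hm
        · exact _root_.trans hm h
      obtain ⟨m', hm'⟩ := hB' (ey ilast)
      have hm3 : r (j 1 (ey ilast)) (j 0 (ex ilast)) := by
        rcases hle 0 ex hexc m' with h | h
        · rwa [h] at hm'
        · exact _root_.trans hm' h
      exact _root_.trans hm2 hm3
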